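/- In an Archimedean effect algebra, every orthosupplement-sharp element argument holds for multiples of atoms below sharp elements: if a is an atom with ord(a) = n_a, and z is sharp with a ≤ z, then n_a·a ≤ z. -/

import Mathlib

structure EffectAlgebra (α : Type*) where
  oplus : α → α → Option α
  zero : α
  one : α
  zero_ne_one : zero ≠ one
  comm : ∀ x y, oplus x y = oplus y x
  assoc : ∀ x y z, (oplus x y).bind (fun w => oplus w z) = (oplus y z).bind (fun w => oplus x w)
  compl : α → α
  oplus_compl : ∀ x, oplus x (compl x) = some one
  compl_unique : ∀ x y, oplus x y = some one → y = compl x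
  one_max : ∀ x, (oplus one x).isSome → x = zero

/-- The order induced by the partial operation: `x ≤ y` iff `∃ z, x ⊕ z = y`. -/
def EffectAlgebra.le {α : Type*} (E : EffectAlgebra α) (x y : α) : Prop :=
  ∃ z, E.oplus x z = some y

/-- A lattice effect algebra: the lattice order coincides with the induced effect-algebra order. -/
structure LatticeEffectAlgebra (α : Type*) [Lattice α] extends EffectAlgebra α where
  le_iff : ∀ x y : α, x ≤ y ↔ ∃ z, oplus x z = some y

variable {α : Type*}

/-- A sharp element: `w ∧ w' = 0`. -/
def EffectAlgebra.Sharp [Lattice α] (E : EffectAlgebra α) (w : α) : Prop :=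
  w ⊓ E.compl w = E.zero

/-- A central element: `x = (x ∧ z) ∨ (x ∧ z')` for all `x`. -/
def EffectAlgebra.Central [Lattice α] (E : EffectAlgebra α) (z : α) : Prop :=
  ∀ x, x = (x ⊓ z) ⊔ (x ⊓ E.compl z)

/-- Compatibility: `x ↔ y` iff `x ∨ y = x ⊕ (y ⊖ (x ∧ y))`, expressed via the
(unique) difference `d = y ⊖ (x ∧ y)`, i.e. `(x ∧ y) ⊕ d = y` and `x ⊕ d = x ∨ y`. -/
def EffectAlgebra.Compatible [Lattice α] (E : EffectAlgebra α) (x y : α) : Prop :=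
  ∃ d, E.oplus (x ⊓ y) d = some y ∧ E.oplus x d = some (x ⊔ y)

/-- An atom: a minimal nonzero element. -/
def EffectAlgebra.IsAtom' [Lattice α] (E : EffectAlgebra α) (a : α) : Prop :=
  a ≠ E.zero ∧ ∀ b, b ≤ a → b = E.zero ∨ b = a

/-- The `n`-fold sum `n • a` (as a partial element). -/
def EffectAlgebra.nsum (E : EffectAlgebra α) (a : α) : ℕ → Option α
  | 0 => some E.zero
  | n + 1 => (EffectAlgebra.nsum E a n).bind fun w => E.oplus w a

/-- Archimedean: every nonzero element has finite order. -/
def EffectAlgebra.IsArchimedean (E : EffectAlgebra α) : Prop :=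
  ∀ a : α, a ≠ E.zero → ∃ n, EffectAlgebra.nsum E a n = none

/-- Atomic: below every nonzero element there is an atom. -/
def EffectAlgebra.IsAtomic [Lattice α] (E : EffectAlgebra α) : Prop :=
  ∀ x, x ≠ E.zero → ∃ a, EffectAlgebra.IsAtom' E a ∧ a ≤ x

/-- An atom of the center `C(E)`: a minimal nonzero central element. -/
def EffectAlgebra.CenterAtom [Lattice α] (E : EffectAlgebra α) (p : α) : Prop :=
  EffectAlgebra.Central E p ∧ p ≠ E.zero ∧
    ∀ c, EffectAlgebra.Central E c → c ≤ p → c = E.zero ∨ c = p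


section Aux

variable {α : Type*}

theorem EA_compl_compl (E : EffectAlgebra α) (x : α) : E.compl (E.compl x) = x :=
  (E.compl_unique (E.compl x) x (by rw [E.comm]; exact E.oplus_compl x)).symm

theorem EA_compl_one (E : EffectAlgebra α) : E.compl E.one = E.zero :=
  E.one_max _ (by rw [E.oplus_compl]; exact rfl)

theorem EA_oplus_zero (E : EffectAlgebra α) (x : α) : E.oplus x E.zero = some x := by
  have h1 : E.oplus E.one E.zero = some E.one := by
    rw [← EA_compl_one E]; exact E.oplus_compl E.one
  have ha := E.assoc (E.compl x) x E.zero
  rw [show E.oplus (E.compl x) x = some E.one by rw [E.comm]; exact E.oplus_compl x] at ha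
  simp only [Option.bind_some, h1] at ha
  cases hxz : E.oplus x E.zero with
  | none => rw [hxz] at ha; simp at ha
  | some f =>
    rw [hxz] at ha
    simp only [Option.bind_some] at ha
    have hf : f = E.compl (E.compl x) := E.compl_unique _ _ ha.symm
    rw [hf, EA_compl_compl]

/-- From `x ⊕ y = e`, conclude `y ⊕ e' = x'`. -/
theorem EA_res (E : EffectAlgebra α) {x y e : α} (h : E.oplus x y = some e) :
    E.oplus y (E.compl e) = some (E.compl x) := by
  have ha := E.assoc x y (E.compl e)
  rw [h] at ha
  simp only [Option.bind_some, E.oplus_compl] at ha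
  cases hye : E.oplus y (E.compl e) with
  | none => rw [hye] at ha; simp at ha
  | some f =>
    rw [hye] at ha
    simp only [Option.bind_some] at ha
    rw [E.compl_unique x f ha.symm]

theorem EA_cancel (E : EffectAlgebra α) {x y z e : α}
    (hy : E.oplus x y = some e) (hz : E.oplus x z = some e) : y = z := by
  have h3 := EA_res E (EA_res E hy)
  have h4 := EA_res E (EA_res E hz)
  rw [h3] at h4
  have := Option.some.inj h4
  have : E.compl (E.compl y) = E.compl (E.compl z) := by rw [this]
  rwa [EA_compl_compl, EA_compl_compl] at this

variable [Lattice α]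

theorem LEA_zero_le (E : LatticeEffectAlgebra α) (x : α) : E.zero ≤ x :=
  (E.le_iff _ _).2 ⟨x, by rw [E.comm]; exact EA_oplus_zero E.toEffectAlgebra x⟩

theorem LEA_le_left (E : LatticeEffectAlgebra α) {x y w : α}
    (h : E.oplus x y = some w) : x ≤ w := (E.le_iff _ _).2 ⟨y, h⟩

theorem LEA_le_right (E : LatticeEffectAlgebra α) {x y w : α}
    (h : E.oplus x y = some w) : y ≤ w :=
  (E.le_iff _ _).2 ⟨x, by rw [E.comm]; exact h⟩

theorem LEA_le_compl (E : LatticeEffectAlgebra α) {x y w : α}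
    (h : E.oplus x y = some w) : y ≤ E.compl x :=
  (E.le_iff _ _).2 ⟨E.compl w, EA_res E.toEffectAlgebra h⟩

theorem LEA_defined (E : LatticeEffectAlgebra α) {x y : α}
    (h : y ≤ E.compl x) : ∃ w, E.oplus x y = some w := by
  obtain ⟨c, hc⟩ := (E.le_iff _ _).1 h
  have ha := E.assoc x y c
  rw [hc] at ha
  simp only [Option.bind_some, E.oplus_compl] at ha
  cases hxy : E.oplus x y with
  | none => rw [hxy] at ha; simp at ha
  | some w => exact ⟨w, rfl⟩

theorem LEA_compl_antitone (E : LatticeEffectAlgebra α) {x y : α}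
    (h : x ≤ y) : E.compl y ≤ E.compl x := by
  obtain ⟨c, hc⟩ := (E.le_iff _ _).1 h
  exact (E.le_iff _ _).2 ⟨c, by rw [E.comm]; exact EA_res E.toEffectAlgebra hc⟩

/-- If `x ⊓ y = 0` and `x ⊕ y = w`, then `w = x ⊔ y`. -/
theorem LEA_oplus_disjoint (E : LatticeEffectAlgebra α) {x y w : α}
    (hinf : x ⊓ y = E.zero) (h : E.oplus x y = some w) : w = x ⊔ y := by
  have hsup : x ⊔ y ≤ w := sup_le (LEA_le_left E h) (LEA_le_right E h)
  obtain ⟨d, hd⟩ := (E.le_iff _ _).1 hsup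
  -- show d ≤ x
  have hdx : d ≤ x := by
    obtain ⟨e, he⟩ := (E.le_iff _ _).1 (le_sup_right : y ≤ x ⊔ y)
    have ha := E.assoc y e d
    rw [he] at ha
    simp only [Option.bind_some] at ha
    rw [hd] at ha
    cases hed : E.oplus e d with
    | none => rw [hed] at ha; simp at ha
    | some f =>
      rw [hed] at ha
      simp only [Option.bind_some] at ha
      have hyx : E.oplus y x = some w := by rw [E.comm]; exact h
      have : f = x := EA_cancel E.toEffectAlgebra ha.symm hyx
      exact LEA_le_right E (this ▸ hed)
  have hdy : d ≤ y := by
    obtain ⟨e, he⟩ := (E.le_iff _ _).1 (le_sup_left : x ≤ x ⊔ y)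
    have ha := E.assoc x e d
    rw [he] at ha
    simp only [Option.bind_some] at ha
    rw [hd] at ha
    cases hed : E.oplus e d with
    | none => rw [hed] at ha; simp at ha
    | some f =>
      rw [hed] at ha
      simp only [Option.bind_some] at ha
      have : f = y := EA_cancel E.toEffectAlgebra ha.symm h
      exact LEA_le_right E (this ▸ hed)
  have hd0 : d = E.zero := le_antisymm (hinf ▸ le_inf hdx hdy) (LEA_zero_le E d)
  rw [hd0, EA_oplus_zero] at hd
  exact (Option.some.inj hd).symm

/-- Sharp elements are principal. -/
theorem LEA_sharp_principal (E : LatticeEffectAlgebra α) {z u v w : α}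
    (hz : E.Sharp z) (hu : u ≤ z) (hv : v ≤ z) (h : E.oplus u v = some w) :
    w ≤ z := by
  have hvz : v ⊓ E.compl z = E.zero :=
    le_antisymm (hz ▸ inf_le_inf_right (E.compl z) hv) (LEA_zero_le E _)
  obtain ⟨s, hs⟩ := LEA_defined E (x := v) (y := E.compl z) (LEA_compl_antitone E hv)
  have hseq : s = v ⊔ E.compl z := LEA_oplus_disjoint E hvz hs
  have hsu : s ≤ E.compl u :=
    hseq ▸ sup_le (LEA_le_compl E h) (LEA_compl_antitone E hu)
  obtain ⟨t, ht⟩ := LEA_defined E hsu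
  have ha := E.assoc u v (E.compl z)
  rw [h, hs] at ha
  simp only [Option.bind_some] at ha
  rw [ht] at ha
  -- ha : E.oplus w (E.compl z) = some t
  have : w ≤ E.compl (E.compl z) :=
    LEA_le_compl E (x := E.compl z) (y := w) (by rw [E.comm]; exact ha)
  rwa [EA_compl_compl] at this

end Aux

/-- in an Archimedean lattice effect algebra, if `a` is an atom
with `ord a = nₐ` and `z` is sharp with `a ≤ z`, then `nₐ • a ≤ z`. -/
theorem atom_multiple_le_sharp {α : Type*} [Lattice α]
    (E : LatticeEffectAlgebra α) (hArch : E.IsArchimedean)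
    (a z : α) (ha : E.IsAtom' a) (hz : E.Sharp z) (haz : a ≤ z)
    (na : ℕ) (hord : E.nsum a na ≠ none ∧ E.nsum a (na + 1) = none) :
    ∃ w, E.nsum a na = some w ∧ w ≤ z := by
  have aux : ∀ k w, E.nsum a k = some w → w ≤ z := by
    intro k
    induction k with
    | zero =>
      intro w h
      rw [EffectAlgebra.nsum] at h
      rw [← Option.some.inj h]
      exact LEA_zero_le E z
    | succ n ih =>
      intro w h
      rw [EffectAlgebra.nsum] at h
      obtain ⟨u, hu, huw⟩ := Option.bind_eq_some_iff.1 h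
      exact LEA_sharp_principal E hz (ih u hu) haz huw
  obtain ⟨w, hw⟩ := Option.ne_none_iff_exists'.1 hord.1
  exact ⟨w, hw, aux na w hw⟩
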